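/- Let c* be the unique positive root of 2 − 2e^c + c(e^c − 2) = 0. For every real b with 0 < b < 1/c*, the program value α(b) = sup{ w·c²·e^{−c} − w²·c²·e^{−2c} : 0 ≤ w ≤ 1, c ≥ 0, w ≤ b·c } equals sup{ b·c³·e^{−c} − b²·c⁴·e^{−2c} : 0 < c ≤ 1/b }, and it is attained at a feasible point with w = b·c (i.e. on the boundary of the constraint w ≤ b·c). -/

import Mathlib

open Real

/-- The optimal value `α(b)` of the program
`max { w c² e^{-c} - w² c² e^{-2c} : 0 ≤ w ≤ 1, 0 ≤ c, w ≤ b c }`. -/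
noncomputable def alphaVal (b : ℝ) : ℝ :=
  sSup {v : ℝ | ∃ w c : ℝ, 0 ≤ w ∧ w ≤ 1 ∧ 0 ≤ c ∧ w ≤ b * c ∧
    v = w * c ^ 2 * Real.exp (-c) - w ^ 2 * c ^ 2 * Real.exp (-(2 * c))}

lemma cs_gt_two (cs : ℝ) (hcs : 0 < cs)
    (hroot : 2 - 2 * Real.exp cs + cs * (Real.exp cs - 2) = 0) : 2 < cs := by
  by_contra h
  push_neg at h
  nlinarith [Real.add_one_le_exp cs, Real.exp_pos cs]

lemma aux_h_nonpos (cs : ℝ) (hcs2 : 2 < cs)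
    (hkey : (2 - cs) * Real.exp cs = 2 - 2 * cs)
    (x : ℝ) (hx : cs ≤ x) :
    (2 - x) * Real.exp x + 2 * x - 2 ≤ 0 := by
  have ht : 0 ≤ x - cs := by linarith
  have hex : Real.exp x = Real.exp cs * Real.exp (x - cs) := by
    rw [← Real.exp_add]; ring_nf
  have h1 : 1 ≤ Real.exp (x - cs) := by
    have := Real.add_one_le_exp (x - cs); linarith
  have h2 : x + 1 ≤ Real.exp x := Real.add_one_le_exp x
  have decomp : (2 - x) * Real.exp x + 2 * x - 2
      = (2 - 2 * cs) * (Real.exp (x - cs) - 1) + (x - cs) * (2 - Real.exp x) := by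
    linear_combination (2 - cs) * hex + Real.exp (x - cs) * hkey
  rw [decomp]
  have t1 : (2 - 2 * cs) * (Real.exp (x - cs) - 1) ≤ 0 :=
    mul_nonpos_of_nonpos_of_nonneg (by linarith) (by linarith)
  have t2 : (x - cs) * (2 - Real.exp x) ≤ 0 :=
    mul_nonpos_of_nonneg_of_nonpos ht (by linarith)
  linarith

lemma g_anti (cs : ℝ) (hcs2 : 2 < cs)
    (hkey : (2 - cs) * Real.exp cs = 2 - 2 * cs) :
    AntitoneOn (fun x : ℝ => x ^ 2 * Real.exp (-x) - x ^ 2 * Real.exp (-(2 * x)))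
      (Set.Ici cs) := by
  have hd : ∀ x : ℝ, HasDerivAt
      (fun x : ℝ => x ^ 2 * Real.exp (-x) - x ^ 2 * Real.exp (-(2 * x)))
      (2 * x * Real.exp (-x) - x ^ 2 * Real.exp (-x)
        - (2 * x * Real.exp (-(2 * x)) - 2 * x ^ 2 * Real.exp (-(2 * x)))) x := by
    intro x
    have d1 : HasDerivAt (fun x : ℝ => Real.exp (-x)) (-Real.exp (-x)) x := by
      simpa using ((hasDerivAt_id x).neg.exp)
    have d2 : HasDerivAt (fun x : ℝ => Real.exp (-(2 * x))) (-(Real.exp (-(2 * x)) * 2)) x := by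
      have : HasDerivAt (fun x : ℝ => -(2 * x)) (-2) x := by
        exact (((hasDerivAt_id x).const_mul (2 : ℝ)).neg).congr_deriv (by ring)
      simpa using this.exp
    have dx : HasDerivAt (fun x : ℝ => x ^ 2) (2 * x) x := by
      simpa using hasDerivAt_pow 2 x
    have := (dx.mul d1).sub (dx.mul d2)
    exact this.congr_deriv (by ring)
  apply antitoneOn_of_deriv_nonpos (convex_Ici cs)
  · exact (Continuous.continuousOn (by continuity))
  · intro x _
    exact (hd x).differentiableAt.differentiableWithinAt
  · intro x hx
    rw [interior_Ici] at hx
    have hx' : cs < x := hx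
    rw [(hd x).deriv]
    have hh := aux_h_nonpos cs hcs2 hkey x hx.le
    have hee : Real.exp (-x) = Real.exp (-(2 * x)) * Real.exp x := by
      rw [← Real.exp_add]; ring_nf
    have hx0 : (0 : ℝ) < x := by linarith
    have hprod : x * Real.exp (-(2 * x)) * ((2 - x) * Real.exp x + 2 * x - 2) ≤ 0 :=
      mul_nonpos_of_nonneg_of_nonpos (by positivity) hh
    nlinarith [hprod, hee, Real.exp_pos (-(2 * x)), Real.exp_pos x]

theorem alpha_of_small_alphabet
    (cs : ℝ) (hcs : 0 < cs)
    (hroot : 2 - 2 * Real.exp cs + cs * (Real.exp cs - 2) = 0)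
    (b : ℝ) (hb : 0 < b) (hb' : b < 1 / cs) :
    alphaVal b = sSup {v : ℝ | ∃ c : ℝ, 0 < c ∧ c ≤ 1 / b ∧
        v = b * c ^ 3 * Real.exp (-c) - b ^ 2 * c ^ 4 * Real.exp (-(2 * c))} ∧
    ∃ c : ℝ, 0 ≤ c ∧ (0 ≤ b * c ∧ b * c ≤ 1) ∧
      (b * c) * c ^ 2 * Real.exp (-c) - (b * c) ^ 2 * c ^ 2 * Real.exp (-(2 * c))
        = alphaVal b := by
  have hcs2 : 2 < cs := cs_gt_two cs hcs hroot
  have hkey : (2 - cs) * Real.exp cs = 2 - 2 * cs := by linear_combination -hroot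
  have hbhalf : b < 1 / 2 := by
    have : 1 / cs < 1 / 2 := by
      apply one_div_lt_one_div_of_lt <;> linarith
    linarith
  have hs : cs < 1 / b := by
    rw [lt_div_iff₀ hb]
    calc cs * b < cs * (1 / cs) := by
          apply mul_lt_mul_of_pos_left hb' (by linarith)
      _ = 1 := by field_simp
  have hsb : 0 < 1 / b := by positivity
  set G : ℝ → ℝ := fun c => b * c ^ 3 * Real.exp (-c) - b ^ 2 * c ^ 4 * Real.exp (-(2 * c))
    with hGdef
  have hGcont : ContinuousOn G (Set.Icc 0 (1 / b)) :=
    (Continuous.continuousOn (by continuity))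
  obtain ⟨c₀, hc₀mem, hc₀max⟩ :=
    isCompact_Icc.exists_isMaxOn (by exact ⟨0, Set.left_mem_Icc.2 hsb.le⟩) hGcont
  obtain ⟨hc₀0, hc₀1⟩ := hc₀mem
  have hsbmem : (1 / b) ∈ Set.Icc (0 : ℝ) (1 / b) := Set.right_mem_Icc.2 hsb.le
  have hGsb_pos : 0 < G (1 / b) := by
    have h1 : G (1 / b) = (1 / b) ^ 2 * (Real.exp (-(1 / b)) - Real.exp (-(2 * (1 / b)))) := by
      rw [hGdef]; field_simp
    have h2 : Real.exp (-(2 * (1 / b))) < Real.exp (-(1 / b)) := by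
      apply Real.exp_lt_exp.2; nlinarith
    rw [h1]
    exact mul_pos (by positivity) (by linarith)
  have hGc₀ := hc₀max hsbmem
  have hGc₀pos : 0 < G c₀ := lt_of_lt_of_le hGsb_pos hGc₀
  have hc₀pos : 0 < c₀ := by
    rcases lt_or_eq_of_le hc₀0 with h | h
    · exact h
    · exfalso
      have : G c₀ = 0 := by rw [hGdef, ← h]; ring
      linarith
  -- main upper bound: every feasible value is at most G c₀
  have hub : ∀ v : ℝ, (∃ w c : ℝ, 0 ≤ w ∧ w ≤ 1 ∧ 0 ≤ c ∧ w ≤ b * c ∧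
      v = w * c ^ 2 * Real.exp (-c) - w ^ 2 * c ^ 2 * Real.exp (-(2 * c))) → v ≤ G c₀ := by
    rintro v ⟨w, c, hw0, hw1, hc0, hwbc, rfl⟩
    set m : ℝ := min 1 (b * c) with hm
    have hwm : w ≤ m := le_min hw1 hwbc
    have hmbc : m ≤ b * c := min_le_right _ _
    have hee : Real.exp (-c) = Real.exp (-(2 * c)) * Real.exp c := by
      rw [← Real.exp_add]; ring_nf
    have hsum : m + w ≤ Real.exp c := by
      have h1 : c + 1 ≤ Real.exp c := Real.add_one_le_exp c
      nlinarith
    have key1 : w * c ^ 2 * Real.exp (-c) - w ^ 2 * c ^ 2 * Real.exp (-(2 * c))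
        ≤ m * c ^ 2 * Real.exp (-c) - m ^ 2 * c ^ 2 * Real.exp (-(2 * c)) := by
      have hprod : 0 ≤ (m - w) * (c ^ 2 * Real.exp (-(2 * c))) * (Real.exp c - (m + w)) := by
        apply mul_nonneg (mul_nonneg (by linarith) (by positivity)) (by linarith)
      have expand : m * c ^ 2 * Real.exp (-c) - m ^ 2 * c ^ 2 * Real.exp (-(2 * c))
          - (w * c ^ 2 * Real.exp (-c) - w ^ 2 * c ^ 2 * Real.exp (-(2 * c)))
          = (m - w) * (c ^ 2 * Real.exp (-(2 * c))) * (Real.exp c - (m + w)) := by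
        rw [hee]; ring
      linarith
    rcases le_or_gt (b * c) 1 with hbc1 | hbc1
    · have hmeq : m = b * c := min_eq_right hbc1
      have hcle : c ≤ 1 / b := by rw [le_div_iff₀ hb]; linarith
      have hGcle : G c ≤ G c₀ := hc₀max ⟨hc0, hcle⟩
      have : m * c ^ 2 * Real.exp (-c) - m ^ 2 * c ^ 2 * Real.exp (-(2 * c)) = G c := by
        rw [hmeq, hGdef]; ring
      linarith
    · have hmeq : m = 1 := min_eq_left hbc1.le
      have hcge : 1 / b < c := by rw [div_lt_iff₀ hb]; linarith
      have hga := g_anti cs hcs2 hkey (Set.mem_Ici.2 hs.le) (Set.mem_Ici.2 (by linarith : cs ≤ c))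
        hcge.le
      have hgG : (1 / b) ^ 2 * Real.exp (-(1 / b)) - (1 / b) ^ 2 * Real.exp (-(2 * (1 / b)))
          = G (1 / b) := by
        rw [hGdef]; field_simp
      rw [hmeq] at key1
      have key1' : w * c ^ 2 * Real.exp (-c) - w ^ 2 * c ^ 2 * Real.exp (-(2 * c))
          ≤ c ^ 2 * Real.exp (-c) - c ^ 2 * Real.exp (-(2 * c)) := by linarith
      have hGc₀' : G (1 / b) ≤ G c₀ := hGc₀
      simp only at hga
      calc w * c ^ 2 * Real.exp (-c) - w ^ 2 * c ^ 2 * Real.exp (-(2 * c))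
          ≤ c ^ 2 * Real.exp (-c) - c ^ 2 * Real.exp (-(2 * c)) := key1'
        _ ≤ (1 / b) ^ 2 * Real.exp (-(1 / b)) - (1 / b) ^ 2 * Real.exp (-(2 * (1 / b))) := hga
        _ = G (1 / b) := hgG
        _ ≤ G c₀ := hGc₀'
  -- G c₀ is a member of the full feasible set
  have hmemfull : G c₀ ∈ {v : ℝ | ∃ w c : ℝ, 0 ≤ w ∧ w ≤ 1 ∧ 0 ≤ c ∧ w ≤ b * c ∧
      v = w * c ^ 2 * Real.exp (-c) - w ^ 2 * c ^ 2 * Real.exp (-(2 * c))} := by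
    refine ⟨b * c₀, c₀, by positivity, ?_, hc₀0, le_refl _, by rw [hGdef]; ring⟩
    calc b * c₀ ≤ b * (1 / b) := by nlinarith
      _ = 1 := by field_simp
  have halpha : alphaVal b = G c₀ := by
    apply le_antisymm
    · exact csSup_le ⟨G c₀, hmemfull⟩ fun v hv => hub v hv
    · exact le_csSup ⟨G c₀, fun v hv => hub v hv⟩ hmemfull
  have hbc₀1 : b * c₀ ≤ 1 := by
    calc b * c₀ ≤ b * (1 / b) := by nlinarith
      _ = 1 := by field_simp
  constructor
  · rw [halpha]
    have hmemS : G c₀ ∈ {v : ℝ | ∃ c : ℝ, 0 < c ∧ c ≤ 1 / b ∧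
        v = b * c ^ 3 * Real.exp (-c) - b ^ 2 * c ^ 4 * Real.exp (-(2 * c))} :=
      ⟨c₀, hc₀pos, hc₀1, rfl⟩
    have hubS : ∀ v ∈ {v : ℝ | ∃ c : ℝ, 0 < c ∧ c ≤ 1 / b ∧
        v = b * c ^ 3 * Real.exp (-c) - b ^ 2 * c ^ 4 * Real.exp (-(2 * c))}, v ≤ G c₀ := by
      rintro v ⟨c, hc0, hc1, rfl⟩
      exact hc₀max ⟨hc0.le, hc1⟩
    exact le_antisymm (le_csSup ⟨G c₀, hubS⟩ hmemS) (csSup_le ⟨G c₀, hmemS⟩ hubS)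
  · exact ⟨c₀, hc₀0, ⟨by positivity, hbc₀1⟩, by rw [halpha, hGdef]; ring⟩
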